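/- In the Piccoli–Rossi minimization, adding the constraints μ̃^S(Ω) ≤ μ^S(Ω) and μ̃^D(Ω) ≤ μ^D(Ω) does not change the infimum: the infimum over pairs of equal-mass measures dominated in total mass by the given marginals equals the unconstrained infimum. -/

import Mathlib

open MeasureTheory

/-- `p`-Wasserstein distance, extended by homogeneity to pairs of equal-mass finite
nonnegative measures (infimum over couplings). -/
noncomputable def Wp (p : ℝ) (μ ν : Measure ℝ) : ENNReal :=
  (sInf {c : ENNReal | ∃ γ : Measure (ℝ × ℝ),
    γ.map Prod.fst = μ ∧ γ.map Prod.snd = ν ∧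
    c = ∫⁻ q, ENNReal.ofReal (|q.1 - q.2| ^ p) ∂γ}) ^ (1 / p)


open scoped ENNReal

lemma Wp_smul_le (p : ℝ) (hp : 1 ≤ p) (ν1 ν2 : Measure ℝ) (c : ℝ≥0∞) (hc : c ≤ 1) :
    Wp p (c • ν1) (c • ν2) ≤ Wp p ν1 ν2 := by
  unfold Wp
  apply ENNReal.rpow_le_rpow _ (by positivity)
  apply le_sInf
  rintro x ⟨γ, hγ1, hγ2, rfl⟩
  refine sInf_le_of_le ⟨c • γ, ?_, ?_, rfl⟩ ?_
  · rw [Measure.map_smul, hγ1]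
  · rw [Measure.map_smul, hγ2]
  · rw [lintegral_smul_measure]
    calc c * _ ≤ 1 * _ := mul_le_mul_left hc _
    _ = _ := one_mul _

lemma mass_ineq (x y m : ℝ≥0∞) :
    (x - min m (min x y)) + (min m (min x y) - x)
      + (y - min m (min x y)) + (min m (min x y) - y)
    ≤ (x - m) + (m - x) + (y - m) + (m - y) := by
  rcases le_total m (min x y) with h | h
  · rw [min_eq_left h]
  · have hm' : min m (min x y) = min x y := min_eq_right h
    rw [hm']
    rcases le_total x y with hxy | hxy
    · rw [min_eq_left hxy] at h ⊢
      rw [tsub_eq_zero_of_le hxy, tsub_eq_zero_of_le h, tsub_self, add_zero]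
      simp only [zero_add]
      calc y - x ≤ (y - m) + (m - x) := tsub_le_tsub_add_tsub
        _ = (m - x) + (y - m) := add_comm _ _
        _ ≤ (m - x) + (y - m) + (m - y) := self_le_add_right _ _
    · rw [min_eq_right hxy] at h ⊢
      rw [tsub_eq_zero_of_le hxy, tsub_eq_zero_of_le h, tsub_self, add_zero, add_zero,
        add_zero]
      calc x - y ≤ (x - m) + (m - y) := tsub_le_tsub_add_tsub
        _ ≤ (x - m) + (m - x) + (m - y) := add_le_add_left (self_le_add_right _ _) _
        _ = (x - m) + (m - x) + 0 + (m - y) := by rw [add_zero]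

/-- The Piccoli–Rossi objective: `a(|μS(Ω) − ν1(Ω)| + |μD(Ω) − ν2(Ω)|) + b·W_p(ν1, ν2)`,
with absolute values of masses encoded via truncated subtraction in `ℝ≥0∞`. -/
noncomputable def PRcost (a b p : ℝ) (μS μD ν1 ν2 : Measure ℝ) : ENNReal :=
  ENNReal.ofReal a *
    ((μS Set.univ - ν1 Set.univ) + (ν1 Set.univ - μS Set.univ)
      + (μD Set.univ - ν2 Set.univ) + (ν2 Set.univ - μD Set.univ))
    + ENNReal.ofReal b * Wp p ν1 ν2

/-- In the Piccoli–Rossi minimization, adding the constraints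
`ν1(Ω) ≤ μS(Ω)` and `ν2(Ω) ≤ μD(Ω)` does not change the infimum. -/
theorem PR_inf_eq_constrained_inf (a b p : ℝ) (ha : 0 < a) (hb : 0 < b) (hp : 1 ≤ p)
    (μS μD : Measure ℝ) [IsFiniteMeasure μS] [IsFiniteMeasure μD] :
    sInf {c : ENNReal | ∃ ν1 ν2 : Measure ℝ, IsFiniteMeasure ν1 ∧ IsFiniteMeasure ν2 ∧
        ν1 Set.univ = ν2 Set.univ ∧ c = PRcost a b p μS μD ν1 ν2}
      = sInf {c : ENNReal | ∃ ν1 ν2 : Measure ℝ, IsFiniteMeasure ν1 ∧ IsFiniteMeasure ν2 ∧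
        ν1 Set.univ = ν2 Set.univ ∧
        ν1 Set.univ ≤ μS Set.univ ∧ ν2 Set.univ ≤ μD Set.univ ∧
        c = PRcost a b p μS μD ν1 ν2} := by
  apply le_antisymm
  · apply sInf_le_sInf
    rintro c ⟨ν1, ν2, h1, h2, h3, _, _, hc⟩
    exact ⟨ν1, ν2, h1, h2, h3, hc⟩
  · apply le_sInf
    rintro c ⟨ν1, ν2, h1, h2, hm, rfl⟩
    by_cases h0 : ν1 Set.univ = 0
    · exact sInf_le ⟨ν1, ν2, h1, h2, hm, by simp [h0], by simp [← hm, h0], rfl⟩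
    · set s := μS Set.univ with hs
      set d := μD Set.univ with hd
      set m := ν1 Set.univ with hmm
      have hmne : m ≠ ⊤ := (measure_lt_top ν1 _).ne
      set m' := min m (min s d) with hm'
      set cc : ℝ≥0∞ := m' / m with hcc
      have hcle : cc ≤ 1 := ENNReal.div_le_of_le_mul (by rw [one_mul]; exact min_le_left _ _)
      have hmass1 : (cc • ν1) Set.univ = m' := by
        rw [Measure.smul_apply, smul_eq_mul, ← hmm, ENNReal.div_mul_cancel h0 hmne]
      have hmass2 : (cc • ν2) Set.univ = m' := by
        rw [Measure.smul_apply, smul_eq_mul, ← hm, ENNReal.div_mul_cancel h0 hmne]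
      have hfin : m' ≠ ⊤ := fun h => hmne (top_le_iff.mp (h ▸ min_le_left m (min s d)))
      haveI i1 : IsFiniteMeasure (cc • ν1) :=
        ⟨by rw [hmass1]; exact hfin.lt_top⟩
      haveI i2 : IsFiniteMeasure (cc • ν2) :=
        ⟨by rw [hmass2]; exact hfin.lt_top⟩
      refine sInf_le_of_le ⟨cc • ν1, cc • ν2, i1, i2, by rw [hmass1, hmass2],
        by rw [hmass1]; exact le_trans (min_le_right _ _) (min_le_left _ _),
        by rw [hmass2]; exact le_trans (min_le_right _ _) (min_le_right _ _), rfl⟩ ?_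
      unfold PRcost
      rw [hmass1, hmass2, ← hs, ← hd, ← hmm, ← hm]
      exact add_le_add (mul_le_mul_right (mass_ineq s d m) _)
        (mul_le_mul_right (Wp_smul_le p hp ν1 ν2 cc hcle) _)
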